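/- Let p be a prime, d a positive natural number, γ ≥ 0 a real number, and a ∈ ℚ_p nonzero. If τ_1, …, τ_n is a collection of p-adic (γ, a)-equiangular lines in ℚ_p^d and |a²·n| ≥ γ², then |n| ≤ |d|, where |n| and |d| denote the p-adic absolute values of the integers n and d and |a²·n| denotes the p-adic absolute value of a² times n. -/

import Mathlib

open scoped BigOperators

noncomputable section

variable {p : ℕ} [Fact p.Prime]

/-- The bilinear form `⟨x, y⟩ = ∑ i, x i * y i` on `ℚ_p^d`. -/
def pinner {d : ℕ} (x y : Fin d → ℚ_[p]) : ℚ_[p] := ∑ i, x i * y i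

/-- `⟨·, y⟩` as a linear map. -/
def pinnerL {d : ℕ} (y : Fin d → ℚ_[p]) : (Fin d → ℚ_[p]) →ₗ[ℚ_[p]] ℚ_[p] where
  toFun x := pinner x y
  map_add' x z := by simp [pinner, add_mul, Finset.sum_add_distrib]
  map_smul' c x := by simp [pinner, Finset.mul_sum, mul_assoc]

/-- The frame operator `S_τ x = ∑ j, ⟨x, τ j⟩ • τ j`. -/
def frameOp {d n : ℕ} (τ : Fin n → Fin d → ℚ_[p]) :
    (Fin d → ℚ_[p]) →ₗ[ℚ_[p]] (Fin d → ℚ_[p]) :=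
  ∑ j, (pinnerL (τ j)).smulRight (τ j)

/-- `S_τ` is similar (through an invertible operator) to a diagonal operator with
eigenvalues `λ_1, …, λ_d` satisfying `|∑ λ_j|² ≤ |d| |∑ λ_j²|`. -/
def GoodDiagonalizable {d n : ℕ} (τ : Fin n → Fin d → ℚ_[p]) : Prop :=
  ∃ (P : (Fin d → ℚ_[p]) ≃ₗ[ℚ_[p]] (Fin d → ℚ_[p])) (lam : Fin d → ℚ_[p]),
    frameOp τ = P.toLinearMap ∘ₗ Matrix.toLin' (Matrix.diagonal lam) ∘ₗ P.symm.toLinearMap ∧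
    ‖∑ j, lam j‖ ^ 2 ≤ ‖(d : ℚ_[p])‖ * ‖∑ j, lam j ^ 2‖

/-- p-adic `γ`-equiangular lines. -/
def IsPadicEquiangular {d n : ℕ} (γ : ℝ) (τ : Fin n → Fin d → ℚ_[p]) : Prop :=
  (∀ j, pinner (τ j) (τ j) = 1) ∧
  (∀ j k, j ≠ k → ‖pinner (τ j) (τ k)‖ = γ) ∧
  GoodDiagonalizable τ

/-- p-adic `(γ, a)`-equiangular lines. -/
def IsPadicEquiangularA {d n : ℕ} (γ : ℝ) (a : ℚ_[p]) (τ : Fin n → Fin d → ℚ_[p]) : Prop :=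
  (∀ j, pinner (τ j) (τ j) = a) ∧
  (∀ j k, j ≠ k → ‖pinner (τ j) (τ k)‖ = γ) ∧
  GoodDiagonalizable τ


lemma pinnerL_apply {d : ℕ} (y x : Fin d → ℚ_[p]) : pinnerL y x = pinner x y := rfl

lemma pinner_single {d : ℕ} (i : Fin d) (y : Fin d → ℚ_[p]) :
    pinner (Pi.single i 1) y = y i := by
  simp [pinner, Pi.single_apply]

lemma trace_pi {d : ℕ} (f : (Fin d → ℚ_[p]) →ₗ[ℚ_[p]] (Fin d → ℚ_[p])) :
    LinearMap.trace ℚ_[p] _ f = ∑ i, f (Pi.single i 1) i := by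
  rw [LinearMap.trace_eq_matrix_trace ℚ_[p] (Pi.basisFun ℚ_[p] (Fin d))]
  simp [Matrix.trace, Matrix.diag, LinearMap.toMatrix_apply]

lemma trace_frameOp {d n : ℕ} (τ : Fin n → Fin d → ℚ_[p]) :
    LinearMap.trace ℚ_[p] _ (frameOp τ) = ∑ j, pinner (τ j) (τ j) := by
  rw [trace_pi]
  simp only [frameOp, LinearMap.coe_sum, Finset.sum_apply, LinearMap.smulRight_apply,
    Pi.smul_apply, smul_eq_mul, pinnerL_apply, LinearMap.coe_mk, AddHom.coe_mk, pinner_single]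
  rw [Finset.sum_comm]
  simp [pinner]

lemma trace_smulRight {d : ℕ} (y v : Fin d → ℚ_[p]) :
    LinearMap.trace ℚ_[p] _ ((pinnerL y).smulRight v) = pinner y v := by
  rw [trace_pi]
  simp only [LinearMap.smulRight_apply, pinnerL_apply, LinearMap.coe_mk, AddHom.coe_mk,
    Pi.smul_apply, smul_eq_mul, pinner_single]
  rfl

lemma frameOp_comp {d n : ℕ} (τ : Fin n → Fin d → ℚ_[p]) :
    frameOp τ ∘ₗ frameOp τ =
      ∑ j, ∑ k, pinner (τ k) (τ j) • ((pinnerL (τ k)).smulRight (τ j)) := by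
  refine LinearMap.ext fun x => funext fun i => ?_
  simp only [frameOp, LinearMap.comp_apply, LinearMap.coe_sum, Finset.sum_apply,
    LinearMap.smulRight_apply, LinearMap.smul_apply, Pi.smul_apply, smul_eq_mul,
    pinnerL_apply, LinearMap.coe_mk, AddHom.coe_mk]
  have : ∀ j : Fin n,
      pinner (∑ k, pinner x (τ k) • τ k) (τ j) = ∑ k, pinner x (τ k) * pinner (τ k) (τ j) := by
    intro j
    simp [pinner, Finset.mul_sum, Finset.sum_mul]
    rw [Finset.sum_comm]
    exact Finset.sum_congr rfl fun k _ => Finset.sum_congr rfl fun a _ =>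
      Finset.sum_congr rfl fun b _ => by ring
  rw [Finset.sum_congr rfl fun j _ => by rw [this j, Finset.sum_mul]]
  congr 1; ext j
  congr 1; ext k
  ring

lemma trace_frameOp_sq {d n : ℕ} (τ : Fin n → Fin d → ℚ_[p]) :
    LinearMap.trace ℚ_[p] _ (frameOp τ ∘ₗ frameOp τ) =
      ∑ j, ∑ k, pinner (τ k) (τ j) * pinner (τ k) (τ j) := by
  rw [frameOp_comp]
  simp only [map_sum, map_smul, trace_smulRight, smul_eq_mul]

lemma trace_toLin'_diag {d : ℕ} (lam : Fin d → ℚ_[p]) :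
    LinearMap.trace ℚ_[p] _ (Matrix.toLin' (Matrix.diagonal lam)) = ∑ j, lam j := by
  rw [LinearMap.trace_eq_matrix_trace ℚ_[p] (Pi.basisFun ℚ_[p] (Fin d)),
    LinearMap.toMatrix_eq_toMatrix', LinearMap.toMatrix'_toLin', Matrix.trace_diagonal]

lemma trace_conj_diag {d : ℕ} (P : (Fin d → ℚ_[p]) ≃ₗ[ℚ_[p]] (Fin d → ℚ_[p]))
    (lam : Fin d → ℚ_[p]) :
    LinearMap.trace ℚ_[p] _
      (P.toLinearMap ∘ₗ Matrix.toLin' (Matrix.diagonal lam) ∘ₗ P.symm.toLinearMap)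
      = ∑ j, lam j := by
  have : P.toLinearMap ∘ₗ Matrix.toLin' (Matrix.diagonal lam) ∘ₗ P.symm.toLinearMap
      = P.conj (Matrix.toLin' (Matrix.diagonal lam)) := by
    rw [LinearEquiv.conj_apply, LinearMap.comp_assoc]
  rw [this, LinearMap.trace_conj', trace_toLin'_diag]

lemma conj_diag_sq {d : ℕ} (P : (Fin d → ℚ_[p]) ≃ₗ[ℚ_[p]] (Fin d → ℚ_[p]))
    (lam : Fin d → ℚ_[p]) :
    (P.toLinearMap ∘ₗ Matrix.toLin' (Matrix.diagonal lam) ∘ₗ P.symm.toLinearMap) ∘ₗ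
      (P.toLinearMap ∘ₗ Matrix.toLin' (Matrix.diagonal lam) ∘ₗ P.symm.toLinearMap)
      = P.toLinearMap ∘ₗ Matrix.toLin' (Matrix.diagonal (fun j => lam j * lam j)) ∘ₗ
          P.symm.toLinearMap := by
  have h1 : P.toLinearMap ∘ₗ Matrix.toLin' (Matrix.diagonal lam) ∘ₗ P.symm.toLinearMap
      = P.conj (Matrix.toLin' (Matrix.diagonal lam)) := by
    rw [LinearEquiv.conj_apply, LinearMap.comp_assoc]
  have h2 : P.toLinearMap ∘ₗ Matrix.toLin' (Matrix.diagonal (fun j => lam j * lam j)) ∘ₗ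
        P.symm.toLinearMap
      = P.conj (Matrix.toLin' (Matrix.diagonal (fun j => lam j * lam j))) := by
    rw [LinearEquiv.conj_apply, LinearMap.comp_assoc]
  rw [h1, h2, ← LinearEquiv.conj_comp]
  congr 1
  rw [← Matrix.toLin'_mul, Matrix.diagonal_mul_diagonal]

theorem padic_vanLintSeidel_case_large_a {d n : ℕ} (hd : 0 < d)
    (γ : ℝ) (hγ : 0 ≤ γ) (a : ℚ_[p]) (ha : a ≠ 0) (τ : Fin n → Fin d → ℚ_[p])
    (h : IsPadicEquiangularA γ a τ) (hn : γ ^ 2 ≤ ‖a ^ 2 * (n : ℚ_[p])‖) :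
    ‖(n : ℚ_[p])‖ ≤ ‖(d : ℚ_[p])‖ := by
  obtain ⟨h1, h2, P, lam, hS, hineq⟩ := h
  have hsum : ∑ j, lam j = (n : ℚ_[p]) * a := by
    have h0 := trace_conj_diag P lam
    rw [← hS, trace_frameOp] at h0
    rw [← h0]
    simp [h1, Finset.sum_const, Finset.card_univ, nsmul_eq_mul]
  have hsq : ∑ j, lam j ^ 2 = ∑ j, ∑ k, pinner (τ k) (τ j) * pinner (τ k) (τ j) := by
    have h3 := trace_conj_diag P (fun j => lam j * lam j)
    rw [← conj_diag_sq, ← hS, trace_frameOp_sq] at h3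
    rw [show (∑ j, lam j ^ 2) = ∑ j, lam j * lam j from by simp [pow_two]]
    exact h3.symm
  have hC : (0:ℝ) ≤ ‖a ^ 2 * (n : ℚ_[p])‖ := norm_nonneg _
  have hoff : ∀ j k : Fin n, k ≠ j →
      ‖pinner (τ k) (τ j) * pinner (τ k) (τ j)‖ ≤ ‖a ^ 2 * (n : ℚ_[p])‖ := by
    intro j k hkj
    rw [norm_mul, h2 k j hkj]
    calc γ * γ = γ ^ 2 := (sq γ).symm
    _ ≤ _ := hn
  have hsplit : ∀ j : Fin n, ∑ k, pinner (τ k) (τ j) * pinner (τ k) (τ j)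
      = a * a + ∑ k ∈ Finset.univ.erase j, pinner (τ k) (τ j) * pinner (τ k) (τ j) := by
    intro j
    rw [← Finset.add_sum_erase _ _ (Finset.mem_univ j), h1 j]
  have hT2norm : ‖∑ j, ∑ k, pinner (τ k) (τ j) * pinner (τ k) (τ j)‖
      ≤ ‖a ^ 2 * (n : ℚ_[p])‖ := by
    rw [Finset.sum_congr rfl fun j _ => hsplit j, Finset.sum_add_distrib]
    refine le_trans (IsUltrametricDist.norm_add_le_max _ _) (max_le ?_ ?_)
    · rw [Finset.sum_const, Finset.card_univ, Fintype.card_fin, nsmul_eq_mul]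
      apply le_of_eq
      congr 1
      ring
    · refine IsUltrametricDist.norm_sum_le_of_forall_le_of_nonneg hC fun j _ => ?_
      exact IsUltrametricDist.norm_sum_le_of_forall_le_of_nonneg hC fun k hk =>
        hoff j k (Finset.ne_of_mem_erase hk)
  have hfin : ‖(n : ℚ_[p])‖ ^ 2 * ‖a‖ ^ 2
      ≤ ‖(d : ℚ_[p])‖ * (‖a‖ ^ 2 * ‖(n : ℚ_[p])‖) := by
    have h4 := hineq
    rw [hsum] at h4
    calc ‖(n : ℚ_[p])‖ ^ 2 * ‖a‖ ^ 2 = ‖(n : ℚ_[p]) * a‖ ^ 2 := by rw [norm_mul]; ring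
    _ ≤ ‖(d : ℚ_[p])‖ * ‖∑ j, lam j ^ 2‖ := h4
    _ ≤ ‖(d : ℚ_[p])‖ * ‖a ^ 2 * (n : ℚ_[p])‖ := by
        refine mul_le_mul_of_nonneg_left ?_ (norm_nonneg _)
        rw [hsq]; exact hT2norm
    _ = ‖(d : ℚ_[p])‖ * (‖a‖ ^ 2 * ‖(n : ℚ_[p])‖) := by rw [norm_mul, norm_pow]
  by_cases hn0 : (n : ℚ_[p]) = 0
  · simp only [hn0, norm_zero]
    exact norm_nonneg _
  · have hpos : 0 < ‖(n : ℚ_[p])‖ := norm_pos_iff.mpr hn0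
    have hapos : 0 < ‖a‖ := norm_pos_iff.mpr ha
    nlinarith [hfin, hpos, hapos, mul_pos (mul_pos hapos hapos) hpos]


end
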